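/- For the RCA with initial state (α, β, γ), ‖X(3)‖² = 2cos²θ·|α|² + (2cos⁴θ + (1−2cos²θ)²)(|β|²+|γ|²) + 2cos²θ(1−2cos²θ)(β·conj(γ)+conj(β)·γ) + cos θ(1−3cos²θ)(α(conj(β)−conj(γ)) + conj(α)(β−γ)). -/

import Mathlib

theorem stmt13 (θ : ℝ) (α β γ : ℂ) (X : ℤ × ℕ → ℂ)
    (hrec : ∀ (k : ℤ) (n : ℕ),
      X (k, n + 2) = (Real.cos θ : ℂ) * (X (k + 1, n + 1) - X (k - 1, n + 1)) + X (k, n))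
    (h00 : X (0, 0) = α) (hm1 : X (-1, 1) = β) (hp1 : X (1, 1) = γ)
    (h0 : ∀ k : ℤ, k ≠ 0 → X (k, 0) = 0)
    (h1 : ∀ k : ℤ, k ≠ -1 → k ≠ 1 → X (k, 1) = 0) :
    ((∑' k : ℤ, ‖X (k, 3)‖ ^ 2 : ℝ) : ℂ) =
      2 * ((Real.cos θ ^ 2 : ℝ) : ℂ) * ((‖α‖ ^ 2 : ℝ) : ℂ) +
      ((2 * Real.cos θ ^ 4 + (1 - 2 * Real.cos θ ^ 2) ^ 2 : ℝ) : ℂ) *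
        ((‖β‖ ^ 2 + ‖γ‖ ^ 2 : ℝ) : ℂ) +
      ((2 * Real.cos θ ^ 2 * (1 - 2 * Real.cos θ ^ 2) : ℝ) : ℂ) *
        (β * (starRingEnd ℂ) γ + (starRingEnd ℂ) β * γ) +
      ((Real.cos θ * (1 - 3 * Real.cos θ ^ 2) : ℝ) : ℂ) *
        (α * ((starRingEnd ℂ) β - (starRingEnd ℂ) γ) + (starRingEnd ℂ) α * (β - γ)) := by
  set c : ℂ := (Real.cos θ : ℂ) with hc
  -- time-2 values
  have h2z : ∀ k : ℤ, k ≠ -2 → k ≠ 0 → k ≠ 2 → X (k, 2) = 0 := by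
    intro k ha hb hd
    rw [show (2 : ℕ) = 0 + 2 from rfl, hrec k 0,
      h1 (k+1) (by omega) (by omega), h1 (k-1) (by omega) (by omega), h0 k hb]
    ring
  have h2m : X (-2, 2) = c * β := by
    have h := hrec (-2) 0
    rw [show (-2:ℤ)+1 = -1 from rfl, show (-2:ℤ)-1 = -3 from rfl] at h
    rw [h, hm1, h1 (-3) (by omega) (by omega), h0 (-2) (by omega)]
    ring
  have h20 : X (0, 2) = c * (γ - β) + α := by
    have h := hrec 0 0
    rw [show (0:ℤ)+1 = 1 from rfl, show (0:ℤ)-1 = -1 from rfl] at h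
    rw [h, hm1, hp1, h00]
  have h2p : X (2, 2) = -(c * γ) := by
    have h := hrec 2 0
    rw [show (2:ℤ)+1 = 3 from rfl, show (2:ℤ)-1 = 1 from rfl] at h
    rw [h, hp1, h1 3 (by omega) (by omega), h0 2 (by omega)]
    ring
  -- time-3 values
  have h3z : ∀ k : ℤ, k ≠ -3 → k ≠ -1 → k ≠ 1 → k ≠ 3 → X (k, 3) = 0 := by
    intro k ha hb hd he
    rw [show (3 : ℕ) = 1 + 2 from rfl, hrec k 1,
      h2z (k+1) (by omega) (by omega) (by omega),
      h2z (k-1) (by omega) (by omega) (by omega),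
      h1 k hb hd]
    ring
  have e1 : X (-3, 3) = c * (c * β) := by
    have h := hrec (-3) 1
    rw [show (-3:ℤ)+1 = -2 from rfl, show (-3:ℤ)-1 = -4 from rfl] at h
    rw [h, h2m, h2z (-4) (by omega) (by omega) (by omega),
      h1 (-3) (by omega) (by omega)]
    ring
  have e2 : X (-1, 3) = c * α + (1 - 2 * c ^ 2) * β + c ^ 2 * γ := by
    have h := hrec (-1) 1
    rw [show (-1:ℤ)+1 = 0 from rfl, show (-1:ℤ)-1 = -2 from rfl] at h
    rw [h, h20, h2m, hm1]
    ring
  have e3 : X (1, 3) = -(c * α) + c ^ 2 * β + (1 - 2 * c ^ 2) * γ := by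
    have h := hrec 1 1
    rw [show (1:ℤ)+1 = 2 from rfl, show (1:ℤ)-1 = 0 from rfl] at h
    rw [h, h20, h2p, hp1]
    ring
  have e4 : X (3, 3) = c * (c * γ) := by
    have h := hrec 3 1
    rw [show (3:ℤ)+1 = 4 from rfl, show (3:ℤ)-1 = 2 from rfl] at h
    rw [h, h2p, h2z 4 (by omega) (by omega) (by omega),
      h1 3 (by omega) (by omega)]
    ring
  -- collapse the tsum
  have hsum : (∑' k : ℤ, ‖X (k, 3)‖ ^ 2 : ℝ)
      = ‖X (-3, 3)‖ ^ 2 + ‖X (-1, 3)‖ ^ 2 + ‖X (1, 3)‖ ^ 2 + ‖X (3, 3)‖ ^ 2 := by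
    have hz : ∀ k ∉ ({-3, -1, 1, 3} : Finset ℤ), ‖X (k, 3)‖ ^ 2 = 0 := by
      intro k hk
      simp only [Finset.mem_insert, Finset.mem_singleton] at hk
      push_neg at hk
      rw [h3z k hk.1 hk.2.1 hk.2.2.1 hk.2.2.2]
      simp
    rw [tsum_eq_sum hz]
    norm_num [Finset.sum_insert]
    ring
  rw [hsum]
  have key : ∀ z : ℂ, ((‖z‖ ^ 2 : ℝ) : ℂ) = z * (starRingEnd ℂ) z := by
    intro z
    rw [Complex.sq_norm]
    exact (Complex.mul_conj z).symm
  push_cast [key]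
  rw [e1, e2, e3, e4]
  have hcc : (starRingEnd ℂ) c = c := Complex.conj_ofReal _
  simp only [map_add, map_sub, map_mul, map_pow, map_one, map_ofNat, map_neg, hcc,
    ← Complex.ofReal_cos, ← hc]
  ring
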